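/- Let m_k(μ_sc)=∫x^k dμ_sc denote the moments of the semicircle law, so m_{2k}(μ_sc) is the k-th Catalan number and odd moments vanish. Then for all integers i,j≥1, m_{i+j}(μ_sc) − m_i(μ_sc)·m_j(μ_sc) = Σ_{l≥1} D_{i,l}·D_{j,l}, i.e. the covariance matrix of the centered monomials (x^i−m_i(μ_sc))_{i≥1} under μ_sc equals D·Dᵀ. -/

import Mathlib

open MeasureTheory ProbabilityTheory Filter Topology Polynomial
open scoped ENNReal NNReal

noncomputable section

/-- The semicircle law on `[-2,2]`, with Lebesgue density `√(4-x²)/(2π)`. -/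
def semicircle : Measure ℝ :=
  volume.withDensity (fun x => ENNReal.ofReal
    (if x ∈ Set.Icc (-2 : ℝ) 2 then Real.sqrt (4 - x ^ 2) / (2 * Real.pi) else 0))

/-- The `k`-th moment of the semicircle law. -/
def mSc (k : ℕ) : ℝ := ∫ x, x ^ k ∂semicircle

/-- Binomial coefficient with integer lower index, with the convention `C(n,k) = 0` for `k < 0`. -/
def intChoose (n : ℕ) (k : ℤ) : ℕ := if k < 0 then 0 else n.choose k.toNat

/-- The infinite matrix `D` with entries
`D_{i,j} = C(i,(i-j)/2) - C(i,(i-j)/2 - 1)` for `j ≤ i`, `i+j` even, and `0` otherwise. -/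
def Dmat (i j : ℕ) : ℝ :=
  if j ≤ i ∧ Even (i + j) then
    (intChoose i (((i : ℤ) - j) / 2) : ℝ) - (intChoose i (((i : ℤ) - j) / 2 - 1) : ℝ)
  else 0


open MeasureTheory intervalIntegral Real

lemma intChoose_pascal (n : ℕ) (k : ℤ) :
    intChoose (n+1) k = intChoose n k + intChoose n (k-1) := by
  unfold intChoose
  rcases lt_trichotomy k 0 with h | h | h
  · rw [if_pos h, if_pos h, if_pos (by omega : k - 1 < 0)]
  · subst h; norm_num
  · rw [if_neg (by omega), if_neg (by omega), if_neg (by omega)]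
    obtain ⟨s, rfl⟩ : ∃ s : ℕ, k = (s : ℤ) + 1 := ⟨(k-1).toNat, by omega⟩
    have h1 : ((s : ℤ) + 1).toNat = s + 1 := by omega
    have h2 : ((s : ℤ) + 1 - 1).toNat = s := by omega
    rw [h1, h2, Nat.choose_succ_succ']; ring

lemma Dvanish {i l : ℕ} (h : i < l) : Dmat i l = 0 := by
  unfold Dmat; rw [if_neg]; omega

lemma Drec (n l : ℕ) : Dmat (n+1) (l+1) = Dmat n l + Dmat n (l+2) := by
  by_cases hc : l ≤ n ∧ Even (n + l)
  · obtain ⟨hln, m, hm⟩ := hc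
    obtain ⟨t, ht⟩ : ∃ t : ℕ, (n:ℤ) - l = 2*t := ⟨m - l, by omega⟩
    rw [Dmat, Dmat, if_pos ⟨by omega, ⟨m+1, by omega⟩⟩, if_pos ⟨hln, ⟨m, hm⟩⟩]
    push_cast
    rw [(by omega : ((n:ℤ) + 1 - ((l:ℤ)+1))/2 = t), (by omega : ((n:ℤ) - l)/2 = t)]
    by_cases h2 : l + 2 ≤ n
    · rw [Dmat, if_pos ⟨h2, ⟨m+1, by omega⟩⟩]
      push_cast
      rw [(by omega : ((n:ℤ) - ((l:ℤ)+2))/2 = t - 1)]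
      rw [intChoose_pascal, intChoose_pascal]
      push_cast
      ring
    · have hn : n = l ∧ t = 0 := by omega
      obtain ⟨rfl, rfl⟩ := hn
      rw [Dmat, if_neg (by omega)]
      simp [intChoose]
  · rw [Dmat, if_neg, Dmat, if_neg, Dmat, if_neg]
    · ring
    · rintro ⟨h1, m, hm⟩; exact hc ⟨by omega, ⟨m - 1, by omega⟩⟩
    · exact hc
    · rintro ⟨h1, m, hm⟩; exact hc ⟨by omega, ⟨m - 1, by omega⟩⟩

lemma Drec0 (n : ℕ) : Dmat (n+1) 0 = Dmat n 1 := by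
  by_cases hev : Even (n + 1)
  · obtain ⟨m, hm⟩ := hev
    have hm1 : 1 ≤ m := by omega
    rw [Dmat, Dmat, if_pos ⟨by omega, ⟨m, by omega⟩⟩, if_pos ⟨by omega, ⟨m, by omega⟩⟩]
    push_cast
    rw [(by omega : ((n:ℤ) + 1 - 0)/2 = (m:ℤ)), (by omega : ((n:ℤ) - 1)/2 = (m:ℤ) - 1)]
    rw [intChoose_pascal, intChoose_pascal]
    have hsym : intChoose n (m:ℤ) = intChoose n ((m:ℤ) - 1) := by
      unfold intChoose
      rw [if_neg (by omega), if_neg (by omega)]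
      rw [(by omega : ((m:ℤ)).toNat = m), (by omega : ((m:ℤ) - 1).toNat = m - 1)]
      rw [← Nat.choose_symm (by omega : m ≤ n)]
      congr 1
      omega
    push_cast
    rw [hsym]
    push_cast
    ring
  · rw [Dmat, Dmat, if_neg, if_neg]
    · rintro ⟨h1, m, hm⟩; exact hev ⟨m, by omega⟩
    · rintro ⟨h1, m, hm⟩; exact hev ⟨m, by omega⟩

lemma Dmat_zero_right (l : ℕ) : Dmat 0 l = if l = 0 then 1 else 0 := by
  rcases Nat.eq_zero_or_pos l with rfl | hl
  · simp [Dmat, intChoose]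
  · rw [Dvanish hl, if_neg (by omega)]

lemma Ssum : ∀ i j : ℕ, ∑ l ∈ Finset.range (i+j+2), Dmat i l * Dmat j l = Dmat (i+j) 0 := by
  intro i
  induction i with
  | zero =>
    intro j
    rw [Finset.sum_range_succ']
    simp only [Dmat_zero_right]
    simp
  | succ i ih =>
    intro j
    have key : ∑ l ∈ Finset.range (i+1+j+2), Dmat (i+1) l * Dmat j l
        = ∑ l ∈ Finset.range (i+(j+1)+2), Dmat i l * Dmat (j+1) l := by
      have hL : ∑ l ∈ Finset.range (i+j+3), Dmat (i+1) l * Dmat j l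
          = ∑ l ∈ Finset.range (i+j+3), (Dmat i l * Dmat j (l+1) + Dmat i (l+1) * Dmat j l) := by
        rw [Finset.sum_range_succ' (fun l => Dmat (i+1) l * Dmat j l) (i+j+2)]
        simp only [Drec, Drec0]
        rw [Finset.sum_add_distrib]
        have e1 : ∑ l ∈ Finset.range (i+j+3), Dmat i l * Dmat j (l+1)
            = ∑ l ∈ Finset.range (i+j+2), Dmat i l * Dmat j (l+1) := by
          rw [Finset.sum_range_succ, Dvanish (by omega : i < i+j+2), zero_mul, add_zero]
        have e2 : (∑ l ∈ Finset.range (i+j+2), Dmat i (l+2) * Dmat j (l+1)) + Dmat i 1 * Dmat j 0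
            = ∑ l ∈ Finset.range (i+j+3), Dmat i (l+1) * Dmat j l := by
          rw [Finset.sum_range_succ' (fun l => Dmat i (l+1) * Dmat j l) (i+j+2)]
        simp only [add_mul]
        rw [Finset.sum_add_distrib, ← e1, ← e2]
        ring
      have hR : ∑ l ∈ Finset.range (i+j+3), Dmat i l * Dmat (j+1) l
          = ∑ l ∈ Finset.range (i+j+3), (Dmat i l * Dmat j (l+1) + Dmat i (l+1) * Dmat j l) := by
        rw [Finset.sum_range_succ' (fun l => Dmat i l * Dmat (j+1) l) (i+j+2)]
        simp only [Drec, Drec0]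
        rw [Finset.sum_add_distrib]
        have e1 : ∑ l ∈ Finset.range (i+j+3), Dmat i (l+1) * Dmat j l
            = ∑ l ∈ Finset.range (i+j+2), Dmat i (l+1) * Dmat j l := by
          rw [Finset.sum_range_succ, Dvanish (by omega : i < i+j+2+1), zero_mul, add_zero]
        have e2 : (∑ l ∈ Finset.range (i+j+2), Dmat i (l+1) * Dmat j (l+2)) + Dmat i 0 * Dmat j 1
            = ∑ l ∈ Finset.range (i+j+3), Dmat i l * Dmat j (l+1) := by
          rw [Finset.sum_range_succ' (fun l => Dmat i l * Dmat j (l+1)) (i+j+2)]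
        simp only [mul_add]
        rw [Finset.sum_add_distrib, ← e1, ← e2]
        ring
      rw [(by omega : i+1+j+2 = i+j+3), (by omega : i+(j+1)+2 = i+j+3), hL, hR]
    rw [key, ih (j+1), (by omega : i+(j+1) = i+1+j)]

lemma Dmat_even_zero (k : ℕ) : Dmat (2*k) 0 = (catalan k : ℝ) := by
  rw [Dmat, if_pos ⟨by omega, ⟨k, by omega⟩⟩]
  push_cast
  rw [(by omega : (2 * (k:ℤ) - 0)/2 = (k:ℤ))]
  rcases Nat.eq_zero_or_pos k with rfl | hk
  · simp [intChoose]
  · rw [intChoose, intChoose, if_neg (by omega), if_neg (by omega),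
      (by omega : ((k:ℤ)).toNat = k), (by omega : ((k:ℤ)-1).toNat = k - 1)]
    have h1 : ((k:ℕ) + 1) * catalan k = Nat.centralBinom k :=
      succ_mul_catalan_eq_centralBinom k
    have h3 := Nat.choose_succ_right_eq (2*k) (k-1)
    rw [(by omega : k - 1 + 1 = k), (by omega : 2*k - (k-1) = k + 1)] at h3
    have h2 : (2*k).choose k = Nat.centralBinom k := rfl
    rw [h2] at h3
    have h1' : ((k:ℝ) + 1) * (catalan k : ℝ) = (Nat.centralBinom k : ℝ) := by exact_mod_cast h1
    have h3' : (Nat.centralBinom k : ℝ) * k = ((2*k).choose (k-1) : ℝ) * ((k:ℝ)+1) := by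
      exact_mod_cast h3
    have hne : ((k:ℝ) + 1) ≠ 0 := by positivity
    apply mul_left_cancel₀ hne
    rw [h2]
    linear_combination h3' - h1'

lemma Dmat_odd_zero (k : ℕ) : Dmat (2*k+1) 0 = 0 := by
  rw [Dmat, if_neg]
  rintro ⟨-, m, hm⟩; omega

lemma tsum_Dmat (i j : ℕ) :
    ∑' l : ℕ, Dmat i (l+1) * Dmat j (l+1) = Dmat (i+j) 0 - Dmat i 0 * Dmat j 0 := by
  rw [tsum_eq_sum (s := Finset.range (i+j+1))
    (fun l hl => by rw [Dvanish (i := i) (by simp at hl; omega), zero_mul])]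
  have h := Ssum i j
  rw [Finset.sum_range_succ' (fun l => Dmat i l * Dmat j l) (i+j+1)] at h
  linarith

def rho (x : ℝ) : ℝ := if x ∈ Set.Icc (-2 : ℝ) 2 then Real.sqrt (4 - x ^ 2) / (2 * Real.pi) else 0

lemma rho_nonneg (x : ℝ) : 0 ≤ rho x := by
  unfold rho; split
  · positivity
  · exact le_refl 0

lemma rho_meas : Measurable rho := by
  apply Measurable.ite measurableSet_Icc
  · exact ((Real.continuous_sqrt.comp (by continuity)).div_const _).measurable
  · exact measurable_const

lemma mSc_eq_interval (k : ℕ) :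
    mSc k = ∫ x in (-2:ℝ)..2, Real.sqrt (4 - x ^ 2) / (2 * Real.pi) * x ^ k := by
  have h0 : mSc k = ∫ x, (rho x).toNNReal • x ^ k := by
    rw [mSc, semicircle]
    exact integral_withDensity_eq_integral_smul (rho_meas.real_toNNReal) _
  have h1 : ∀ x : ℝ, (rho x).toNNReal • x ^ k
      = Set.indicator (Set.Icc (-2:ℝ) 2)
          (fun x => Real.sqrt (4 - x ^ 2) / (2 * Real.pi) * x ^ k) x := by
    intro x
    rw [NNReal.smul_def, Real.coe_toNNReal _ (rho_nonneg x), Set.indicator_apply, rho]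
    by_cases hx : x ∈ Set.Icc (-2:ℝ) 2
    · rw [if_pos hx, if_pos hx, smul_eq_mul]
    · rw [if_neg hx, if_neg hx, smul_eq_mul, zero_mul]
  rw [h0]
  simp_rw [h1]
  rw [MeasureTheory.integral_indicator measurableSet_Icc, MeasureTheory.integral_Icc_eq_integral_Ioc,
    intervalIntegral.integral_of_le (by norm_num : (-2:ℝ) ≤ 2)]

lemma g_cont (k : ℕ) : Continuous (fun x : ℝ => Real.sqrt (4 - x ^ 2) / (2 * Real.pi) * x ^ k) := by
  exact ((Real.continuous_sqrt.comp (by continuity)).div_const _).mul (continuous_pow k)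

lemma subst (k : ℕ) :
    ∫ x in (-2:ℝ)..2, Real.sqrt (4 - x ^ 2) / (2 * Real.pi) * x ^ k
      = ∫ θ in (0:ℝ)..Real.pi,
          2 * Real.sin θ * (Real.sqrt (4 - (2 * Real.cos θ) ^ 2) / (2 * Real.pi) * (2 * Real.cos θ) ^ k) := by
  have h := intervalIntegral.integral_comp_smul_deriv
    (a := (0:ℝ)) (b := Real.pi) (f := fun θ => 2 * Real.cos θ)
    (f' := fun θ => -(2 * Real.sin θ))
    (g := fun x => Real.sqrt (4 - x ^ 2) / (2 * Real.pi) * x ^ k)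
    (fun θ _ => by simpa using ((Real.hasDerivAt_cos θ).const_mul 2).congr_deriv (by ring))
    ((by fun_prop : Continuous fun θ:ℝ => -(2*Real.sin θ)).continuousOn) (g_cont k)
  simp only [Function.comp] at h
  rw [Real.cos_zero, Real.cos_pi] at h
  norm_num at h
  have e1 := intervalIntegral.integral_symm (a := (0:ℝ)) (b := Real.pi)
    (f := fun θ => 2 * Real.sin θ *
      (Real.sqrt (4 - (2 * Real.cos θ) ^ 2) / (2 * Real.pi) * (2 * Real.cos θ) ^ k)) (μ := volume)
  have e2 := intervalIntegral.integral_symm (a := (-2:ℝ)) (b := 2)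
    (f := fun x => Real.sqrt (4 - x ^ 2) / (2 * Real.pi) * x ^ k) (μ := volume)
  rw [e2] at h
  linarith

lemma mSc_wallis (k : ℕ) :
    mSc k = 2^(k+1)/Real.pi *
      ((∫ θ in (0:ℝ)..Real.pi, Real.cos θ^k) - ∫ θ in (0:ℝ)..Real.pi, Real.cos θ^(k+2)) := by
  rw [mSc_eq_interval, subst]
  have hcongr : Set.EqOn
      (fun θ => 2 * Real.sin θ * (Real.sqrt (4 - (2 * Real.cos θ) ^ 2) / (2 * Real.pi) * (2 * Real.cos θ) ^ k))
      (fun θ => 2^(k+1)/Real.pi * (Real.cos θ^k - Real.cos θ^(k+2)))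
      (Set.uIcc (0:ℝ) Real.pi) := by
    intro θ hθ
    rw [Set.uIcc_of_le Real.pi_pos.le] at hθ
    have hs : 0 ≤ Real.sin θ := Real.sin_nonneg_of_nonneg_of_le_pi hθ.1 hθ.2
    have hsq : 4 - (2 * Real.cos θ) ^ 2 = (2 * Real.sin θ)^2 := by
      have h := Real.sin_sq_add_cos_sq θ
      linear_combination (-4) * h
    simp only
    rw [hsq, Real.sqrt_sq (by positivity)]
    have hs2 : Real.sin θ ^ 2 = 1 - Real.cos θ ^ 2 := Real.sin_sq θ
    linear_combination (2^(k+1) * Real.cos θ^k / Real.pi) * hs2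
  rw [intervalIntegral.integral_congr hcongr]
  rw [intervalIntegral.integral_const_mul]
  rw [intervalIntegral.integral_sub (by apply Continuous.intervalIntegrable; fun_prop)
    (by apply Continuous.intervalIntegrable; fun_prop)]

def J (n : ℕ) : ℝ := ∫ θ in (0:ℝ)..Real.pi, Real.cos θ^n

lemma J_zero : J 0 = Real.pi := by simp [J]

lemma J_one : J 1 = 0 := by simp [J]

lemma J_rec (n : ℕ) : J (n+2) = (n+1)/(n+2) * J n := by
  rw [J, integral_cos_pow, J]
  simp

lemma J_even (k : ℕ) : J (2*k) = Real.pi * (Nat.centralBinom k) / 4^k := by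
  induction k with
  | zero => simp [J_zero, Nat.centralBinom]
  | succ k ih =>
    rw [(by omega : 2*(k+1) = 2*k+2), J_rec, ih]
    have hs := Nat.succ_mul_centralBinom_succ k
    have hs' : ((k:ℝ)+1) * (Nat.centralBinom (k+1) : ℝ) = 2*(2*k+1) * (Nat.centralBinom k : ℝ) := by
      exact_mod_cast hs
    have h4 : (4:ℝ)^(k+1) = 4 * 4^k := by ring
    rw [h4]
    have hk2 : ((2*k:ℕ):ℝ) = 2*(k:ℝ) := by push_cast; ring
    rw [hk2]
    field_simp
    linear_combination (-2) * hs'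
  
lemma J_odd (k : ℕ) : J (2*k+1) = 0 := by
  induction k with
  | zero => exact J_one
  | succ k ih =>
    rw [(by omega : 2*(k+1)+1 = (2*k+1)+2), J_rec, ih, mul_zero]

lemma mSc_even (k : ℕ) : mSc (2*k) = (catalan k : ℝ) := by
  rw [mSc_wallis, (by omega : 2*k+2 = 2*(k+1))]
  rw [show (∫ θ in (0:ℝ)..Real.pi, Real.cos θ^(2*k)) = J (2*k) from rfl,
    show (∫ θ in (0:ℝ)..Real.pi, Real.cos θ^(2*(k+1))) = J (2*(k+1)) from rfl,
    J_even, J_even]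
  have h1 : ((k:ℝ)+1) * (catalan k : ℝ) = (Nat.centralBinom k : ℝ) := by
    exact_mod_cast succ_mul_catalan_eq_centralBinom k
  have hs' : ((k:ℝ)+1) * (Nat.centralBinom (k+1) : ℝ) = 2*(2*k+1) * (Nat.centralBinom k : ℝ) := by
    exact_mod_cast Nat.succ_mul_centralBinom_succ k
  have h2 : (2:ℝ)^(2*k+1) = 2 * 4^k := by rw [pow_succ, pow_mul]; norm_num; ring
  have h4 : (4:ℝ)^(k+1) = 4 * 4^k := by ring
  rw [h2, h4]
  have hpi := Real.pi_ne_zero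
  have h4p : (4:ℝ)^k ≠ 0 := by positivity
  field_simp
  apply mul_left_cancel₀ (show ((k:ℝ)+1) ≠ 0 by positivity)
  linear_combination (-4)*h1 - 2*hs'

lemma mSc_odd (k : ℕ) : mSc (2*k+1) = 0 := by
  rw [mSc_wallis, (by omega : 2*k+1+2 = 2*(k+1)+1)]
  rw [show (∫ θ in (0:ℝ)..Real.pi, Real.cos θ^(2*k+1)) = J (2*k+1) from rfl,
    show (∫ θ in (0:ℝ)..Real.pi, Real.cos θ^(2*(k+1)+1)) = J (2*(k+1)+1) from rfl,
    J_odd, J_odd]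
  simp

/-- **Covariance identity for the semicircle moments (Lemma 2.3 of [Nagel 2013], eq. (18)).**
For all `i, j ≥ 1`, `m_{i+j}(μ_sc) - m_i(μ_sc)·m_j(μ_sc) = Σ_{l≥1} D_{i,l}·D_{j,l}`,
i.e. the covariance matrix of the centered monomials under the semicircle law is `D·Dᵀ`. -/
theorem semicircle_covariance_DDt (i j : ℕ) (hi : 1 ≤ i) (hj : 1 ≤ j) :
    mSc (i + j) - mSc i * mSc j = ∑' l : ℕ, Dmat i (l + 1) * Dmat j (l + 1) := by
  have e : ∀ n : ℕ, mSc n = Dmat n 0 := by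
    intro n
    rcases Nat.even_or_odd n with ⟨k, hk⟩ | ⟨k, hk⟩
    · rw [show n = 2*k by omega, mSc_even, Dmat_even_zero]
    · rw [show n = 2*k+1 by omega, mSc_odd, Dmat_odd_zero]
  rw [tsum_Dmat, e, e, e]

end
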